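/- Let H be a complex Hilbert space and let Φ : B(H) → B(H) be a unital completely positive linear map. Then the set of fixed points Fix(Φ) = {A ∈ B(H) : Φ(A) = A} is closed under multiplication if and only if for every A ∈ B(H) with Φ(A) = A one also has Φ(A*A) = A*A and Φ(AA*) = AA*. -/

import Mathlib

open scoped Matrix

/-- A map between star rings is *completely positive* if, for every `n`, applying it
entrywise to `n × n` matrices sends positive elements (i.e. those of the form `Nᴴ * N`)
of the matrix ring over the domain to positive elements of the matrix ring over the
codomain. -/
def CompletelyPositive {A B : Type*} [NonUnitalNonAssocSemiring A] [StarRing A]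
    [NonUnitalNonAssocSemiring B] [StarRing B] (Φ : A → B) : Prop :=
  ∀ n : ℕ, ∀ M : Matrix (Fin n) (Fin n) A,
    (∃ N : Matrix (Fin n) (Fin n) A, M = Nᴴ * N) →
      ∃ P : Matrix (Fin n) (Fin n) B, M.map Φ = Pᴴ * P

section Aux
variable {H : Type*} [NormedAddCommGroup H] [InnerProductSpace ℂ H] [CompleteSpace H]
variable {Φ : (H →L[ℂ] H) →ₗ[ℂ] (H →L[ℂ] H)}

lemma cp_apply_one (hcp : CompletelyPositive (⇑Φ)) (z : H →L[ℂ] H) :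
    ∃ p : H →L[ℂ] H, Φ (star z * z) = star p * p := by
  obtain ⟨P, hP⟩ := hcp 1 (Matrix.of fun _ _ => star z * z)
    ⟨Matrix.of fun _ _ => z, by
      ext i j
      simp [Matrix.mul_apply, Matrix.conjTranspose_apply]⟩
  refine ⟨P 0 0, ?_⟩
  have h := congrArg (fun M => M 0 0) hP
  simpa [Matrix.map_apply, Matrix.mul_apply, Matrix.conjTranspose_apply] using h

lemma cp_selfadj (hcp : CompletelyPositive (⇑Φ)) (z : H →L[ℂ] H) :
    star (Φ (star z * z)) = Φ (star z * z) := by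
  obtain ⟨p, hp⟩ := cp_apply_one hcp z
  rw [hp, star_mul, star_star]

lemma cp_star_pres (hcp : CompletelyPositive (⇑Φ)) (x : H →L[ℂ] H) :
    Φ (star x) = star (Φ x) := by
  have h4 : (4:ℂ) • x = star (x + 1) * (x + 1)
      + Complex.I • (star (x + Complex.I • 1) * (x + Complex.I • 1))
      - star (x - 1) * (x - 1)
      - Complex.I • (star (x - Complex.I • 1) * (x - Complex.I • 1)) := by
    simp only [star_add, star_sub, star_smul, star_one, Complex.star_def, Complex.conj_I,
      add_mul, mul_add, sub_mul, mul_sub, smul_mul_assoc, mul_smul_comm, smul_smul,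
      mul_one, one_mul, neg_smul, smul_neg, neg_mul, mul_neg, smul_add, smul_sub,
      Complex.I_mul_I]
    module
  have h4s : (4:ℂ) • star x = star (x + 1) * (x + 1)
      - Complex.I • (star (x + Complex.I • 1) * (x + Complex.I • 1))
      - star (x - 1) * (x - 1)
      + Complex.I • (star (x - Complex.I • 1) * (x - Complex.I • 1)) := by
    simp only [star_add, star_sub, star_smul, star_one, Complex.star_def, Complex.conj_I,
      add_mul, mul_add, sub_mul, mul_sub, smul_mul_assoc, mul_smul_comm, smul_smul,
      mul_one, one_mul, neg_smul, smul_neg, neg_mul, mul_neg, smul_add, smul_sub,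
      Complex.I_mul_I, star_neg]
    module
  set t0 := Φ (star (x + 1) * (x + 1)) with ht0d
  set t1 := Φ (star (x + Complex.I • 1) * (x + Complex.I • 1)) with ht1d
  set t2 := Φ (star (x - 1) * (x - 1)) with ht2d
  set t3 := Φ (star (x - Complex.I • 1) * (x - Complex.I • 1)) with ht3d
  have ht0 : star t0 = t0 := cp_selfadj hcp _
  have ht1 : star t1 = t1 := cp_selfadj hcp _
  have ht2 : star t2 = t2 := cp_selfadj hcp _
  have ht3 : star t3 = t3 := cp_selfadj hcp _
  have e1 : Φ ((4:ℂ) • x) = t0 + Complex.I • t1 - t2 - Complex.I • t3 := by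
    rw [h4, map_sub, map_sub, map_add, map_smul, map_smul]
  have e2 : Φ ((4:ℂ) • star x) = t0 - Complex.I • t1 - t2 + Complex.I • t3 := by
    rw [h4s, map_add, map_sub, map_sub, map_smul, map_smul]
  have key : (4:ℂ) • Φ (star x) = (4:ℂ) • star (Φ x) := by
    have h44 : (4:ℂ) • star (Φ x) = star (Φ ((4:ℂ) • x)) := by
      rw [map_smul, star_smul]
      norm_num
    rw [← map_smul, e2, h44, e1]
    simp only [star_sub, star_add, star_smul, Complex.star_def, Complex.conj_I, ht0, ht1,
      ht2, ht3, neg_smul]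
    abel
  exact smul_right_injective (H →L[ℂ] H) (by norm_num : (4:ℂ) ≠ 0) key

lemma inner_star_apply (T : H →L[ℂ] H) (x z : H) :
    (inner ℂ x ((star T) z) : ℂ) = inner ℂ (T x) z := by
  rw [ContinuousLinearMap.star_eq_adjoint, ContinuousLinearMap.adjoint_inner_right]

lemma inner_apply_move (T : H →L[ℂ] H) (x z : H) :
    (inner ℂ x (T z) : ℂ) = inner ℂ ((star T) x) z := by
  rw [ContinuousLinearMap.star_eq_adjoint, ContinuousLinearMap.adjoint_inner_left]

lemma cp_key (hcp : CompletelyPositive (⇑Φ)) (y : Fin 3 → (H →L[ℂ] H)) (w : Fin 3 → H) :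
    0 ≤ (∑ i, ∑ j, (inner ℂ (w i) ((Φ (star (y i) * y j)) (w j)) : ℂ)).re := by
  obtain ⟨Q, hQ⟩ := hcp 3 (Matrix.of fun i j => star (y i) * y j)
    ⟨Matrix.of fun i j => if i = 0 then y j else 0, by
      ext i j
      simp [Matrix.mul_apply, Matrix.conjTranspose_apply, Fin.sum_univ_three]⟩
  have hentry : ∀ i j, Φ (star (y i) * y j) = (Qᴴ * Q) i j := by
    intro i j
    have h := congrArg (fun M => M i j) hQ
    simpa [Matrix.map_apply] using h
  have hsum : (∑ i, ∑ j, (inner ℂ (w i) ((Φ (star (y i) * y j)) (w j)) : ℂ))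
      = ∑ k, (inner ℂ (∑ i, Q k i (w i)) (∑ j, Q k j (w j)) : ℂ) := by
    calc (∑ i, ∑ j, (inner ℂ (w i) ((Φ (star (y i) * y j)) (w j)) : ℂ))
        = ∑ i, ∑ j, ∑ k, (inner ℂ (Q k i (w i)) (Q k j (w j)) : ℂ) := by
          simp_rw [hentry, Matrix.mul_apply, Matrix.conjTranspose_apply,
            ContinuousLinearMap.sum_apply, inner_sum, ContinuousLinearMap.mul_apply,
            inner_star_apply]
      _ = ∑ i, ∑ k, ∑ j, (inner ℂ (Q k i (w i)) (Q k j (w j)) : ℂ) :=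
          Finset.sum_congr rfl fun i _ => Finset.sum_comm
      _ = ∑ k, ∑ i, ∑ j, (inner ℂ (Q k i (w i)) (Q k j (w j)) : ℂ) := Finset.sum_comm
      _ = ∑ k, (inner ℂ (∑ i, Q k i (w i)) (∑ j, Q k j (w j)) : ℂ) := by
          simp_rw [sum_inner, inner_sum]
  rw [hsum, Complex.re_sum]
  apply Finset.sum_nonneg
  intro k _
  rw [inner_self_eq_norm_sq_to_K]
  simp [← Complex.ofReal_pow]

end Aux

/-- **Theorem 5.5.(b).** For a unital completely positive map `Φ : B(H) → B(H)`, the set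
of fixed points of `Φ` is closed under multiplication if and only if every fixed point
`A` of `Φ` also has `A*A` and `AA*` fixed by `Φ`. -/
theorem fixedPoints_mul_closed_iff_second_order {H : Type*}
    [NormedAddCommGroup H] [InnerProductSpace ℂ H] [CompleteSpace H]
    (Φ : (H →L[ℂ] H) →ₗ[ℂ] (H →L[ℂ] H)) (hunital : Φ 1 = 1)
    (hcp : CompletelyPositive (⇑Φ)) :
    (∀ A B : H →L[ℂ] H, Φ A = A → Φ B = B → Φ (A * B) = A * B) ↔
      ∀ A : H →L[ℂ] H, Φ A = A →
        Φ (star A * A) = star A * A ∧ Φ (A * star A) = A * star A := by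
  constructor
  · intro hmul A hA
    have hA' : Φ (star A) = star A := by rw [cp_star_pres hcp, hA]
    exact ⟨hmul (star A) A hA' hA, hmul A (star A) hA hA'⟩
  · intro h2 A B hA hB
    have hA' : Φ (star A) = star A := by rw [cp_star_pres hcp, hA]
    have hB' : Φ (star B) = star B := by rw [cp_star_pres hcp, hB]
    have hAA : Φ (A * star A) = A * star A := (h2 A hA).2
    set T := Φ (A * B) with hTdef
    have hTstar : Φ (star B * star A) = star T := by
      rw [← star_mul, cp_star_pres hcp]
    have main : ∀ v u : H, 0 ≤ 2 * (inner ℂ u (T v - A (B v)) : ℂ).re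
        + ((inner ℂ v ((Φ (star B * B)) v) : ℂ).re - (inner ℂ (B v) (B v) : ℂ).re) := by
      intro v u
      have h := cp_key hcp ![1, star A, B] ![-((star A) u + B v), u, v]
      have hsum : (∑ i, ∑ j, (inner ℂ ((![-((star A) u + B v), u, v]) i)
            ((Φ (star ((![1, star A, B]) i) * (![1, star A, B]) j))
              ((![-((star A) u + B v), u, v]) j)) : ℂ))
          = inner ℂ u (T v - A (B v)) + inner ℂ (T v - A (B v)) u
            + inner ℂ v ((Φ (star B * B)) v) - inner ℂ (B v) (B v) := by
        simp only [Fin.sum_univ_three, Matrix.cons_val_zero, Matrix.cons_val_one,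
          Matrix.head_cons, Matrix.cons_val_two, Matrix.tail_cons]
        simp only [star_one, star_star, one_mul, mul_one, hunital, hA', hB, hA, hAA,
          hB', hTstar, ← hTdef]
        simp only [ContinuousLinearMap.mul_apply, ContinuousLinearMap.one_apply,
          ContinuousLinearMap.sub_apply, map_add, map_neg, map_sub,
          inner_add_left, inner_add_right, inner_neg_left, inner_neg_right,
          inner_sub_left, inner_sub_right, inner_apply_move, star_star]
        ring
      rw [hsum] at h
      have hconj : (inner ℂ (T v - A (B v)) u : ℂ).re = (inner ℂ u (T v - A (B v)) : ℂ).re := by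
        rw [← inner_conj_symm u]
        exact Complex.conj_re _
      simp only [Complex.add_re, Complex.sub_re] at h
      linarith
    have hv : ∀ v : H, T v - A (B v) = 0 := by
      intro v
      set e := T v - A (B v) with hedef
      set r := (inner ℂ v ((Φ (star B * B)) v) : ℂ).re - (inner ℂ (B v) (B v) : ℂ).re with hrdef
      have hc : ∀ c : ℝ, 0 ≤ -2 * (c * ‖e‖ ^ 2) + r := by
        intro c
        have h := main v (-((c:ℂ) • e))
        have : (inner ℂ (-((c:ℂ) • e)) e : ℂ).re = -(c * ‖e‖ ^ 2) := by
          rw [inner_neg_left, inner_smul_left, inner_self_eq_norm_sq_to_K]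
          simp [← Complex.ofReal_pow]
        rw [this] at h
        linarith
      have hnorm : ‖e‖ ^ 2 = 0 := by
        by_contra h0
        have hp : 0 < ‖e‖ ^ 2 := lt_of_le_of_ne (sq_nonneg _) (Ne.symm h0)
        have h := hc ((r + 1) / (2 * ‖e‖ ^ 2))
        have : -2 * ((r + 1) / (2 * ‖e‖ ^ 2) * ‖e‖ ^ 2) + r = -1 := by
          rw [div_mul_eq_mul_div, mul_div_mul_right _ _ h0]
          ring
        rw [this] at h
        linarith
      have : ‖e‖ = 0 := pow_eq_zero_iff (n := 2) (by norm_num) |>.mp hnorm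
      exact norm_eq_zero.mp this
    ext v
    have := hv v
    rw [sub_eq_zero] at this
    simpa [ContinuousLinearMap.mul_apply] using this
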